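/- For every integer n ≥ 2, the number of hooks of size n that are chiral, i.e., the number of pairs (a,b) with a, b ≥ 0, a+b+1 = n and h(a,b) = (a+1,1^b) chiral, equals 2^{ν(n−2)}, where ν(m) is the number of ones in the binary expansion of m (and ν(0) = 0). -/

import Mathlib

namespace ChiralPaper

/-- The set of cells of the Young diagram of a partition `p` of `n`:
the 0-indexed cell `(i, j)` (row `i`, column `j`) belongs to the diagram iff
`i` is less than the number of parts of `p` that are at least `j + 1`. -/
def cells {n : ℕ} (p : Nat.Partition n) : Finset (ℕ × ℕ) :=
  (Finset.range n ×ˢ Finset.range n).filter fun c =>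
    c.1 < (p.parts.filter fun a => c.2 + 1 ≤ a).card

/-- `T` is a standard Young tableau of shape `p` (encoded as a function on `ℕ × ℕ`,
vanishing off the diagram): it maps the cells bijectively to `{1, …, n}` and is
strictly increasing along rows and down columns. -/
def IsSYT {n : ℕ} (p : Nat.Partition n) (T : ℕ × ℕ → ℕ) : Prop :=
  Set.BijOn T ↑(cells p) (Set.Icc 1 n) ∧
  (∀ x, x ∉ cells p → T x = 0) ∧
  ∀ c ∈ cells p, ∀ d ∈ cells p, c.1 ≤ d.1 → c.2 ≤ d.2 → c ≠ d → T c < T d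

/-- `f_λ`: the number of standard Young tableaux of shape `p`. -/
noncomputable def fSYT {n : ℕ} (p : Nat.Partition n) : ℕ :=
  Nat.card {T : ℕ × ℕ → ℕ // IsSYT p T}

/-- `g_λ`: the number of standard Young tableaux of shape `p` in which the entry `2`
lies in the first column, i.e. in the (0-indexed) cell `(1, 0)`. -/
noncomputable def gSYT {n : ℕ} (p : Nat.Partition n) : ℕ :=
  Nat.card {T : ℕ × ℕ → ℕ // IsSYT p T ∧ T (1, 0) = 2}

/-- A partition is chiral if `g_λ` is odd. -/
def IsChiral {n : ℕ} (p : Nat.Partition n) : Prop := Odd (gSYT p)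

/-- `C(λ) = ∑_{(i,j) ∈ λ} (j - i)`, the sum of contents of the cells. -/
def contentSum {n : ℕ} (p : Nat.Partition n) : ℤ :=
  ∑ c ∈ cells p, ((c.2 : ℤ) - (c.1 : ℤ))

/-- `b(n)`: the number of chiral partitions of `n`. -/
noncomputable def chiralCount (n : ℕ) : ℕ := Nat.card {p : Nat.Partition n // IsChiral p}

/-- `a(n)`: the number of partitions of `n` with `f_λ` odd. -/
noncomputable def oddCount (n : ℕ) : ℕ := Nat.card {p : Nat.Partition n // Odd (fSYT p)}

/-- `b_v(n)`: the number of chiral partitions of `n` with `v₂(f_λ) = v`. -/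
noncomputable def chiralCountV (v n : ℕ) : ℕ :=
  Nat.card {p : Nat.Partition n // IsChiral p ∧ padicValNat 2 (fSYT p) = v}

/-- A partition is self-conjugate iff its Young diagram is symmetric under transposition. -/
def IsSelfConjugate {n : ℕ} (p : Nat.Partition n) : Prop :=
  ∀ i j : ℕ, (i, j) ∈ cells p ↔ (j, i) ∈ cells p

/-- The hook partition `h(a, b) = (a + 1, 1^b)` of `a + b + 1`. -/
def hook (a b : ℕ) : Nat.Partition (a + b + 1) where
  parts := (a + 1) ::ₘ Multiset.replicate b 1
  parts_pos := by
    intro i hi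
    rw [Multiset.mem_cons] at hi
    rcases hi with h | h
    · omega
    · have := Multiset.eq_of_mem_replicate h
      omega
  parts_sum := by
    simp [Multiset.sum_replicate]
    omega

/-- `ν(m)`: the number of ones in the binary expansion of `m`. -/
def nu (m : ℕ) : ℕ := (Nat.digits 2 m).count 1

/-- `bin(m)`: the set of exponents in the binary expansion of `m`. -/
def binSet (m : ℕ) : Finset ℕ := (Finset.range (m + 1)).filter fun k => m.testBit k

/-- The family of parts `f i`, `i ∈ s`, is *neat*: the binary-digit sets of the parts
are pairwise disjoint and their union is the binary-digit set of the total sum. -/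
def Neat {ι : Type*} [DecidableEq ι] (s : Finset ι) (f : ι → ℕ) : Prop :=
  (∀ i ∈ s, ∀ j ∈ s, i ≠ j → Disjoint (binSet (f i)) (binSet (f j))) ∧
  s.biUnion (fun i => binSet (f i)) = binSet (∑ i ∈ s, f i)

/-- `f : ℕ → ℕ` encodes an ordered set partition of `{1, …, n}` of shape `lam`:
`f` vanishes off `{1, …, n}`, takes values in `{1, …, l}` there, and the fiber of
`(i : ℕ) + 1` has cardinality `lam i`.  (The `i`-th block is the fiber of `i + 1`.) -/
def IsOSP (n l : ℕ) (lam : Fin l → ℕ) (f : ℕ → ℕ) : Prop :=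
  (∀ x, x ∉ Finset.Icc 1 n → f x = 0) ∧
  (∀ x ∈ Finset.Icc 1 n, f x ∈ Finset.Icc 1 l) ∧
  ∀ i : Fin l, ((Finset.Icc 1 n).filter fun x => f x = (i : ℕ) + 1).card = lam i

/-- The number of ordered set partitions of shape `lam` moved by the transposition `(1 2)`. -/
noncomputable def movedCount (n l : ℕ) (lam : Fin l → ℕ) : ℕ :=
  Nat.card {f : ℕ → ℕ // IsOSP n l lam f ∧ f ∘ (Equiv.swap 1 2) ≠ f}

/-- The permutation representation `C[X_λ]` is chiral: the transposition `(1 2)` induces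
an odd permutation of `X_λ`, i.e. the number of moved points is `≡ 2 (mod 4)`. -/
def PermChiral (n l : ℕ) (lam : Fin l → ℕ) : Prop := movedCount n l lam % 4 = 2

/-- Chirality of `C[X_λ]` for a partition given as a multiset. -/
def PermChiralP {n : ℕ} (p : Nat.Partition n) : Prop :=
  PermChiral n p.parts.toList.length (fun i => p.parts.toList.get i)

/-- The `k`-th Bell number: the number of set partitions of a `k`-element set. -/
noncomputable def bell (k : ℕ) : ℕ := Nat.card (Finpartition (Finset.univ : Finset (Fin k)))


/-! ### Binary expansion lemmas -/

lemma mem_bitIndices {m : ℕ} : ∀ i : ℕ, i ∈ m.bitIndices ↔ m.testBit i := by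
  induction m using Nat.strong_induction_on with
  | _ m ih =>
    intro i
    rcases Nat.eq_zero_or_pos m with rfl | hm
    · simp
    rcases Nat.even_or_odd m with he | ho
    · obtain ⟨k, hk⟩ := he
      have hk' : m = 2 * k := by omega
      subst hk'
      have hkpos : 0 < k := by omega
      rw [Nat.bitIndices_two_mul]
      cases i with
      | zero =>
        simp [Nat.testBit_zero, Nat.mul_mod_right]
      | succ j =>
        rw [Nat.testBit_succ]
        have : 2 * k / 2 = k := by omega
        rw [this, ← ih k (by omega) j]
        simp [List.mem_map]
    · obtain ⟨k, hk⟩ := ho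
      subst hk
      rw [Nat.bitIndices_two_mul_add_one]
      cases i with
      | zero =>
        simp [Nat.testBit_zero]
      | succ j =>
        rw [Nat.testBit_succ]
        have : (2 * k + 1) / 2 = k := by omega
        rw [this, ← ih k (by omega) j]
        simp [List.mem_map]

lemma binSet_eq_toFinset (m : ℕ) : binSet m = m.bitIndices.toFinset := by
  ext i
  simp only [binSet, Finset.mem_filter, Finset.mem_range, List.mem_toFinset, mem_bitIndices]
  constructor
  · rintro ⟨-, h⟩; exact h
  · intro h
    refine ⟨?_, h⟩
    have h1 : 2 ^ i ≤ m :=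
      Nat.two_pow_le_of_mem_bitIndices ((mem_bitIndices i).2 h)
    have h2 : i < 2 ^ i := Nat.lt_two_pow_self
    omega

lemma mem_binSet {m i : ℕ} : i ∈ binSet m ↔ m.testBit i := by
  rw [binSet_eq_toFinset, List.mem_toFinset, mem_bitIndices]

lemma sum_binSet (m : ℕ) : ∑ i ∈ binSet m, 2 ^ i = m := by
  rw [binSet_eq_toFinset]; exact Finset.twoPowSum_toFinset_bitIndices m

lemma binSet_sum (S : Finset ℕ) : binSet (∑ i ∈ S, 2 ^ i) = S := by
  rw [binSet_eq_toFinset]; exact Finset.toFinset_bitIndices_twoPowSum S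

lemma card_binSet (m : ℕ) : (binSet m).card = nu m := by
  rw [binSet_eq_toFinset, List.card_toFinset,
    Nat.bitIndices_sorted.nodup.dedup]
  unfold nu
  induction m using Nat.strong_induction_on with
  | _ m ih =>
    rcases Nat.eq_zero_or_pos m with rfl | hm
    · simp
    rcases Nat.even_or_odd m with he | ho
    · obtain ⟨k, hk⟩ := he
      have hk' : m = 2 * k := by omega
      subst hk'
      rw [Nat.bitIndices_two_mul, List.length_map,
        Nat.digits_def' (by norm_num : 1 < 2) hm]
      have h1 : 2 * k % 2 = 0 := by omega
      have h2 : 2 * k / 2 = k := by omega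
      rw [h1, h2, List.count_cons]
      simp [ih k (by omega)]
    · obtain ⟨k, hk⟩ := ho
      subst hk
      rw [Nat.bitIndices_two_mul_add_one, List.length_cons, List.length_map,
        Nat.digits_def' (by norm_num : 1 < 2) hm]
      have h1 : (2 * k + 1) % 2 = 1 := by omega
      have h2 : (2 * k + 1) / 2 = k := by omega
      rw [h1, h2, List.count_cons]
      simp [ih k (by omega), add_comm]

/-- Parity of binomial coefficients via Lucas' theorem. -/
lemma odd_choose_iff {m a : ℕ} :
    Odd (m.choose a) ↔ ∀ i : ℕ, a.testBit i → m.testBit i := by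
  rcases lt_or_ge m a with hlt | hle
  · rw [Nat.choose_eq_zero_of_lt hlt]
    simp only [Nat.odd_iff]
    constructor
    · intro h; simp at h
    · intro h
      exfalso
      have hsub : binSet a ⊆ binSet m := fun i hi =>
        mem_binSet.2 (h i (mem_binSet.1 hi))
      have := Finset.sum_le_sum_of_subset (f := fun i => 2 ^ i) hsub
      rw [sum_binSet, sum_binSet] at this
      omega
  · have hp : Fact (Nat.Prime 2) := ⟨Nat.prime_two⟩
    have hm : m < 2 ^ (m + 1) := by
      have := (Nat.lt_two_pow_self : m < 2 ^ m)
      have : (2:ℕ) ^ m ≤ 2 ^ (m+1) := Nat.pow_le_pow_right (by norm_num) (by omega)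
      omega
    have ha : a < 2 ^ (m + 1) := by omega
    have hluc := Choose.choose_modEq_prod_range_choose_nat (p := 2) hm ha
    have hmod : m.choose a % 2 =
        (∏ i ∈ Finset.range (m+1), (m / 2 ^ i % 2).choose (a / 2 ^ i % 2)) % 2 := hluc
    rw [Nat.odd_iff, hmod]
    have hfac : ∀ i : ℕ, (m / 2 ^ i % 2).choose (a / 2 ^ i % 2)
        = if a.testBit i ∧ ¬ m.testBit i then 0 else 1 := by
      intro i
      have hm2 : m / 2 ^ i % 2 = 0 ∨ m / 2 ^ i % 2 = 1 := by omega
      have ha2 : a / 2 ^ i % 2 = 0 ∨ a / 2 ^ i % 2 = 1 := by omega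
      have htm : m.testBit i = decide (m / 2 ^ i % 2 = 1) := by
        rw [Nat.testBit_eq_decide_div_mod_eq]
      have hta : a.testBit i = decide (a / 2 ^ i % 2 = 1) := by
        rw [Nat.testBit_eq_decide_div_mod_eq]
      rcases hm2 with h1 | h1 <;> rcases ha2 with h2 | h2 <;>
        simp [h1, h2, htm, hta]
    rw [show ((∏ i ∈ Finset.range (m+1), (m / 2 ^ i % 2).choose (a / 2 ^ i % 2)) % 2 = 1
        ↔ ¬ (2 ∣ ∏ i ∈ Finset.range (m+1), (m / 2 ^ i % 2).choose (a / 2 ^ i % 2))) by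
      rw [Nat.dvd_iff_mod_eq_zero]; omega]
    rw [Prime.dvd_finset_prod_iff Nat.prime_two.prime _]
    constructor
    · intro h i hai
      by_contra hmi
      by_cases hilt : i < m + 1
      · exact h ⟨i, Finset.mem_range.2 hilt, by rw [hfac i]; simp [hai, hmi]⟩
      · have : a.testBit i = false := by
          apply Nat.testBit_lt_two_pow
          calc a ≤ m := hle
            _ < 2 ^ (m+1) := hm
            _ ≤ 2 ^ i := Nat.pow_le_pow_right (by norm_num) (by omega)
        rw [this] at hai; exact Bool.noConfusion hai
    · rintro h hex
      obtain ⟨i, -, hdvd⟩ := hex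
      rw [hfac i] at hdvd
      by_cases hc : a.testBit i
      · have := h i hc
        simp [hc, this] at hdvd
      · simp [hc] at hdvd

/-! ### Cells of hooks -/

lemma mem_cells_hook {a b i j : ℕ} :
    (i, j) ∈ cells (hook a b) ↔ (j = 0 ∧ i ≤ b) ∨ (i = 0 ∧ 1 ≤ j ∧ j ≤ a) := by
  have hrep : (Multiset.replicate b 1).filter (fun x => j + 1 ≤ x)
      = if j = 0 then Multiset.replicate b 1 else 0 := by
    by_cases h : j = 0
    · rw [if_pos h]
      refine Multiset.filter_eq_self.2 fun x hx => ?_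
      have := Multiset.eq_of_mem_replicate hx
      omega
    · rw [if_neg h]
      refine Multiset.filter_eq_nil.2 fun x hx => ?_
      have := Multiset.eq_of_mem_replicate hx
      omega
  have hc : (((a + 1) ::ₘ Multiset.replicate b 1).filter fun x => j + 1 ≤ x).card
      = (if j ≤ a then 1 else 0) + (if j = 0 then b else 0) := by
    rw [Multiset.filter_cons, hrep, Multiset.card_add]
    simp only [Nat.add_le_add_iff_right]
    split_ifs <;>
      simp only [Multiset.card_singleton, Multiset.card_replicate, Multiset.card_zero] <;>
      omega
  show (i, j) ∈ (Finset.range (a+b+1) ×ˢ Finset.range (a+b+1)).filter _ ↔ _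
  rw [Finset.mem_filter, Finset.mem_product, Finset.mem_range, Finset.mem_range]
  show (i < a + b + 1 ∧ j < a + b + 1) ∧
    i < (((a + 1) ::ₘ Multiset.replicate b 1).filter fun x => j + 1 ≤ x).card ↔ _
  rw [hc]
  split_ifs <;> omega

lemma cells_cases {a b : ℕ} {c : ℕ × ℕ} (hc : c ∈ cells (hook a b)) :
    (c.1 = 0 ∧ c.2 = 0) ∨ (c.1 = 1 ∧ c.2 = 0) ∨ (c.1 = 0 ∧ 1 ≤ c.2 ∧ c.2 ≤ a) ∨
      (c.2 = 0 ∧ 2 ≤ c.1 ∧ c.1 ≤ b) := by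
  obtain ⟨i, j⟩ := c
  rw [mem_cells_hook] at hc
  dsimp only
  omega

/-! ### Enumeration of finsets of naturals -/

/-- The `k`-th smallest element of `S` (0-indexed), or `0` out of range. -/
noncomputable def enum (S : Finset ℕ) (k : ℕ) : ℕ :=
  if h : k < S.card then S.orderEmbOfFin rfl ⟨k, h⟩ else 0

lemma enum_mem {S : Finset ℕ} {k : ℕ} (h : k < S.card) : enum S k ∈ S := by
  rw [enum, dif_pos h]; exact S.orderEmbOfFin_mem rfl _

lemma enum_lt {S : Finset ℕ} {k l : ℕ} (hkl : k < l) (hl : l < S.card) :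
    enum S k < enum S l := by
  rw [enum, enum, dif_pos hl, dif_pos (lt_trans hkl hl)]
  exact (S.orderEmbOfFin rfl).strictMono (show (⟨k, _⟩ : Fin S.card) < ⟨l, hl⟩ from hkl)

lemma enum_inj {S : Finset ℕ} {k l : ℕ} (hk : k < S.card) (hl : l < S.card)
    (h : enum S k = enum S l) : k = l := by
  rcases lt_trichotomy k l with hlt | heq | hgt
  · exact absurd h (ne_of_lt (enum_lt hlt hl))
  · exact heq
  · exact absurd h.symm (ne_of_lt (enum_lt hgt hk))

lemma enum_surj {S : Finset ℕ} {x : ℕ} (hx : x ∈ S) :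
    ∃ k, k < S.card ∧ enum S k = x := by
  have hr := S.range_orderEmbOfFin (rfl : S.card = S.card)
  have : x ∈ Set.range (S.orderEmbOfFin rfl) := by rw [hr]; exact hx
  obtain ⟨⟨k, hk⟩, hkx⟩ := this
  exact ⟨k, hk, by rw [enum, dif_pos hk]; exact hkx⟩

lemma enum_unique {S : Finset ℕ} (g : ℕ → ℕ) (hmem : ∀ k, k < S.card → g k ∈ S)
    (hmono : ∀ k l, k < l → l < S.card → g k < g l) :
    ∀ k, k < S.card → g k = enum S k := by
  have hu := Finset.orderEmbOfFin_unique (rfl : S.card = S.card)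
    (f := fun p : Fin S.card => g p) (fun p => hmem p p.2)
    (fun p q hpq => hmono p q hpq q.2)
  intro k hk
  rw [enum, dif_pos hk]
  exact congrFun hu ⟨k, hk⟩

/-! ### The standard tableau of a hook associated to a finset -/

/-- The standard Young tableau of the hook `(a+1,1^b)` whose first row beyond the
first cell is filled with the elements of `S`, and which carries `2` in cell `(1,0)`. -/
noncomputable def hookTab (a b : ℕ) (S : Finset ℕ) : ℕ × ℕ → ℕ := fun c =>
  if c.2 = 0 then
    if c.1 = 0 then 1
    else if c.1 = 1 then 2
    else if c.1 ≤ b then enum (Finset.Icc 3 (a + b + 1) \ S) (c.1 - 2) else 0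
  else if c.1 = 0 ∧ c.2 ≤ a then enum S (c.2 - 1) else 0

/-- The set of first-row entries (beyond the corner) of a tableau. -/
def rowFinset (a : ℕ) (T : ℕ × ℕ → ℕ) : Finset ℕ :=
  (Finset.Icc 1 a).image fun j => T (0, j)

section HookTab

variable {a b : ℕ} {S : Finset ℕ}

lemma card_Icc3 : (Finset.Icc 3 (a + b + 1)).card = a + b - 1 := by
  rw [Nat.card_Icc]
  omega

lemma card_cpl (hsub : S ⊆ Finset.Icc 3 (a + b + 1)) (hcard : S.card = a) :
    (Finset.Icc 3 (a + b + 1) \ S).card = b - 1 := by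
  have h := Finset.card_le_card hsub
  rw [Finset.card_sdiff_of_subset hsub, card_Icc3, hcard]
  rw [card_Icc3, hcard] at h
  omega

lemma hookTab_00 : hookTab a b S (0, 0) = 1 := by simp [hookTab]

lemma hookTab_10 : hookTab a b S (1, 0) = 2 := by simp [hookTab]

lemma hookTab_row {j : ℕ} (h1 : 1 ≤ j) (h2 : j ≤ a) :
    hookTab a b S (0, j) = enum S (j - 1) := by
  show (if j = 0 then _ else if 0 = 0 ∧ j ≤ a then enum S (j-1) else 0) = _
  rw [if_neg (by omega), if_pos ⟨rfl, h2⟩]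

lemma hookTab_col {i : ℕ} (h1 : 2 ≤ i) (h2 : i ≤ b) :
    hookTab a b S (i, 0) = enum (Finset.Icc 3 (a + b + 1) \ S) (i - 2) := by
  show (if (0:ℕ) = 0 then if i = 0 then _ else if i = 1 then _ else
    if i ≤ b then enum (Finset.Icc 3 (a + b + 1) \ S) (i-2) else 0 else _) = _
  rw [if_pos rfl, if_neg (by omega), if_neg (by omega), if_pos h2]

/-- Classification of the values of `hookTab` on the cells. -/
lemma hookTab_val (hsub : S ⊆ Finset.Icc 3 (a + b + 1)) (hcard : S.card = a)
    {c : ℕ × ℕ} (hc : c ∈ cells (hook a b)) :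
    (c.1 = 0 ∧ c.2 = 0 ∧ hookTab a b S c = 1) ∨
    (c.1 = 1 ∧ c.2 = 0 ∧ hookTab a b S c = 2) ∨
    (c.1 = 0 ∧ 1 ≤ c.2 ∧ c.2 ≤ a ∧ c.2 - 1 < S.card ∧
      hookTab a b S c = enum S (c.2 - 1)) ∨
    (c.2 = 0 ∧ 2 ≤ c.1 ∧ c.1 ≤ b ∧ c.1 - 2 < (Finset.Icc 3 (a + b + 1) \ S).card ∧
      hookTab a b S c = enum (Finset.Icc 3 (a + b + 1) \ S) (c.1 - 2)) := by
  obtain ⟨i, j⟩ := c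
  rcases cells_cases hc with ⟨h1, h2⟩ | ⟨h1, h2⟩ | ⟨h1, h2, h3⟩ | ⟨h1, h2, h3⟩ <;>
    dsimp only at h1 h2 ⊢
  · subst h1; subst h2; exact Or.inl ⟨rfl, rfl, hookTab_00⟩
  · subst h1; subst h2; exact Or.inr (Or.inl ⟨rfl, rfl, hookTab_10⟩)
  · subst h1
    exact Or.inr (Or.inr (Or.inl ⟨rfl, h2, h3, by rw [hcard]; omega, hookTab_row h2 h3⟩))
  · subst h1
    exact Or.inr (Or.inr (Or.inr ⟨rfl, h2, h3, by rw [card_cpl hsub hcard]; omega,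
      hookTab_col h2 h3⟩))

lemma hookTab_isSYT (hb : 1 ≤ b) (hsub : S ⊆ Finset.Icc 3 (a + b + 1))
    (hcard : S.card = a) : IsSYT (hook a b) (hookTab a b S) := by
  have hSmem : ∀ x ∈ S, 3 ≤ x ∧ x ≤ a + b + 1 := by
    intro x hx; have := hsub hx; rwa [Finset.mem_Icc] at this
  have hCmem : ∀ x ∈ Finset.Icc 3 (a + b + 1) \ S, 3 ≤ x ∧ x ≤ a + b + 1 ∧ x ∉ S := by
    intro x hx
    rw [Finset.mem_sdiff, Finset.mem_Icc] at hx
    exact ⟨hx.1.1, hx.1.2, hx.2⟩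
  refine ⟨⟨?_, ?_, ?_⟩, ?_, ?_⟩
  · -- MapsTo
    intro c hc
    rw [Finset.mem_coe] at hc
    rcases hookTab_val hsub hcard hc with ⟨-, -, hv⟩ | ⟨-, -, hv⟩ | ⟨-, -, -, hk, hv⟩ |
      ⟨-, -, -, hk, hv⟩ <;> rw [Set.mem_Icc, hv]
    · omega
    · omega
    · have := hSmem _ (enum_mem hk); omega
    · have := hCmem _ (enum_mem hk); omega
  · -- InjOn
    intro c hc d hd hcd
    rw [Finset.mem_coe] at hc hd
    obtain ⟨i, j⟩ := c; obtain ⟨i', j'⟩ := d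
    rw [Prod.mk.injEq]
    rcases hookTab_val hsub hcard hc with ⟨hc1, hc2, hcv⟩ | ⟨hc1, hc2, hcv⟩ |
        ⟨hc1, hc2, hc3, hck, hcv⟩ | ⟨hc1, hc2, hc3, hck, hcv⟩ <;>
      rcases hookTab_val hsub hcard hd with ⟨hd1, hd2, hdv⟩ | ⟨hd1, hd2, hdv⟩ |
        ⟨hd1, hd2, hd3, hdk, hdv⟩ | ⟨hd1, hd2, hd3, hdk, hdv⟩ <;>
      rw [hcv, hdv] at hcd <;>
      dsimp only at * <;>
      first
      | omega
      | (have := hSmem _ (enum_mem hdk); omega)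
      | (have := hCmem _ (enum_mem hdk); omega)
      | (have := hSmem _ (enum_mem hck); omega)
      | (have := hCmem _ (enum_mem hck); omega)
      | (have := enum_inj hck hdk hcd; omega)
      | (exfalso; exact (hCmem _ (enum_mem hdk)).2.2 (hcd ▸ enum_mem hck))
      | (exfalso; exact (hCmem _ (enum_mem hck)).2.2 (hcd.symm ▸ enum_mem hdk))
  · -- SurjOn
    intro v hv
    rw [Set.mem_Icc] at hv
    rcases eq_or_ne v 1 with rfl | hv1
    · exact ⟨(0,0), by rw [Finset.mem_coe, mem_cells_hook]; omega, hookTab_00⟩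
    rcases eq_or_ne v 2 with rfl | hv2
    · exact ⟨(1,0), by rw [Finset.mem_coe, mem_cells_hook]; omega, hookTab_10⟩
    have hv3 : v ∈ Finset.Icc 3 (a + b + 1) := by rw [Finset.mem_Icc]; omega
    by_cases hvS : v ∈ S
    · obtain ⟨k, hk, hke⟩ := enum_surj hvS
      refine ⟨(0, k + 1), by rw [Finset.mem_coe, mem_cells_hook]; rw [hcard] at hk; omega, ?_⟩
      rw [hookTab_row (by omega) (by rw [hcard] at hk; omega)]
      simpa using hke
    · have hvC : v ∈ Finset.Icc 3 (a + b + 1) \ S := Finset.mem_sdiff.2 ⟨hv3, hvS⟩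
      obtain ⟨k, hk, hke⟩ := enum_surj hvC
      have hk' : k < b - 1 := by rwa [card_cpl hsub hcard] at hk
      refine ⟨(k + 2, 0), by rw [Finset.mem_coe, mem_cells_hook]; omega, ?_⟩
      rw [hookTab_col (by omega) (by omega)]
      simpa using hke
  · -- vanishing off cells
    intro c hc
    obtain ⟨i, j⟩ := c
    rw [mem_cells_hook] at hc
    show (if j = 0 then _ else _) = 0
    by_cases hj : j = 0
    · rw [if_pos hj]
      rw [if_neg (by omega), if_neg (by omega), if_neg (by omega)]
    · rw [if_neg hj, if_neg (by omega)]
  · -- strictly increasing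
    intro c hc d hd h1 h2 hne
    obtain ⟨i, j⟩ := c; obtain ⟨i', j'⟩ := d
    have hne' : ¬ (i = i' ∧ j = j') := by
      rintro ⟨rfl, rfl⟩; exact hne rfl
    dsimp only at h1 h2
    rcases hookTab_val hsub hcard hc with ⟨hc1, hc2, hcv⟩ | ⟨hc1, hc2, hcv⟩ |
        ⟨hc1, hc2, hc3, hck, hcv⟩ | ⟨hc1, hc2, hc3, hck, hcv⟩ <;>
      rcases hookTab_val hsub hcard hd with ⟨hd1, hd2, hdv⟩ | ⟨hd1, hd2, hdv⟩ |
        ⟨hd1, hd2, hd3, hdk, hdv⟩ | ⟨hd1, hd2, hd3, hdk, hdv⟩ <;>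
      rw [hcv, hdv] <;>
      dsimp only at * <;>
      first
      | omega
      | (exfalso; omega)
      | (have := hSmem _ (enum_mem hdk); omega)
      | (have := hCmem _ (enum_mem hdk); omega)
      | (exact enum_lt (by omega) hdk)

lemma hookTab_off (hb : 1 ≤ b) {c : ℕ × ℕ} (hc : c ∉ cells (hook a b)) : hookTab a b S c = 0 := by
  obtain ⟨i, j⟩ := c
  rw [mem_cells_hook] at hc
  show (if j = 0 then _ else _) = 0
  by_cases hj : j = 0
  · rw [if_pos hj, if_neg (by omega), if_neg (by omega), if_neg (by omega)]
  · rw [if_neg hj, if_neg (by omega)]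

variable {T : ℕ × ℕ → ℕ}

lemma syt_00 (hT : IsSYT (hook a b) T) : T (0, 0) = 1 := by
  have h00 : ((0,0) : ℕ × ℕ) ∈ cells (hook a b) := by rw [mem_cells_hook]; omega
  obtain ⟨c, hc, hc1⟩ := hT.1.2.2 (Set.mem_Icc.2 ⟨le_refl 1, by omega⟩)
  rw [Finset.mem_coe] at hc
  rcases eq_or_ne c (0,0) with rfl | hne
  · exact hc1
  · exfalso
    have hlt := hT.2.2 (0,0) h00 c hc (Nat.zero_le _) (Nat.zero_le _) (Ne.symm hne)
    have h1 : T (0,0) ∈ Set.Icc 1 (a+b+1) := hT.1.1 (Finset.mem_coe.2 h00)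
    rw [hc1] at hlt
    rw [Set.mem_Icc] at h1
    omega

lemma syt_row_mem (hb : 1 ≤ b) (hT : IsSYT (hook a b) T) (h2 : T (1, 0) = 2)
    {j : ℕ} (hj1 : 1 ≤ j) (hj2 : j ≤ a) : T (0, j) ∈ Finset.Icc 3 (a + b + 1) := by
  have hcell : ((0, j) : ℕ × ℕ) ∈ cells (hook a b) := by rw [mem_cells_hook]; omega
  have h10 : ((1, 0) : ℕ × ℕ) ∈ cells (hook a b) := by rw [mem_cells_hook]; omega
  have hIcc : T (0, j) ∈ Set.Icc 1 (a+b+1) := hT.1.1 (Finset.mem_coe.2 hcell)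
  rw [Set.mem_Icc] at hIcc
  have h00 : ((0,0) : ℕ × ℕ) ∈ cells (hook a b) := by rw [mem_cells_hook]; omega
  have hgt : T (0,0) < T (0,j) := hT.2.2 (0,0) h00 (0,j) hcell (le_refl 0) (Nat.zero_le _)
    (by intro h; rw [Prod.mk.injEq] at h; omega)
  rw [syt_00 hT] at hgt
  have hne2 : T (0, j) ≠ 2 := by
    intro heq
    have := hT.1.2.1 (Finset.mem_coe.2 hcell) (Finset.mem_coe.2 h10) (by rw [heq, h2])
    rw [Prod.mk.injEq] at this
    omega
  rw [Finset.mem_Icc]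
  omega

lemma rowFinset_subset (hb : 1 ≤ b) (hT : IsSYT (hook a b) T) (h2 : T (1, 0) = 2) :
    rowFinset a T ⊆ Finset.Icc 3 (a + b + 1) := by
  intro x hx
  rw [rowFinset, Finset.mem_image] at hx
  obtain ⟨j, hj, rfl⟩ := hx
  rw [Finset.mem_Icc] at hj
  exact syt_row_mem hb hT h2 hj.1 hj.2

lemma rowFinset_card (hT : IsSYT (hook a b) T) : (rowFinset a T).card = a := by
  rw [rowFinset, Finset.card_image_of_injOn, Nat.card_Icc]
  · omega
  · intro j hj j' hj' heq
    rw [Finset.mem_coe, Finset.mem_Icc] at hj hj'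
    have hcj : ((0, j) : ℕ × ℕ) ∈ cells (hook a b) := by rw [mem_cells_hook]; omega
    have hcj' : ((0, j') : ℕ × ℕ) ∈ cells (hook a b) := by rw [mem_cells_hook]; omega
    have := hT.1.2.1 (Finset.mem_coe.2 hcj) (Finset.mem_coe.2 hcj') heq
    rw [Prod.mk.injEq] at this
    exact this.2

lemma hookTab_rowFinset (hb : 1 ≤ b) (hT : IsSYT (hook a b) T) (h2 : T (1, 0) = 2) :
    hookTab a b (rowFinset a T) = T := by
  have hRsub := rowFinset_subset hb hT h2
  have hRcard := rowFinset_card hT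
  have h10 : ((1, 0) : ℕ × ℕ) ∈ cells (hook a b) := by rw [mem_cells_hook]; omega
  funext c
  obtain ⟨i, j⟩ := c
  by_cases hc : (i, j) ∈ cells (hook a b)
  swap
  · rw [hookTab_off hb hc, hT.2.1 _ hc]
  rcases cells_cases hc with ⟨h1, h2'⟩ | ⟨h1, h2'⟩ | ⟨h1, h2', h3⟩ | ⟨h1, h2', h3⟩ <;>
    dsimp only at h1 h2' <;> subst h1
  · subst h2'; rw [hookTab_00, syt_00 hT]
  · subst h2'; rw [hookTab_10, h2]
  · -- first row
    rw [hookTab_row h2' h3]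
    have key := enum_unique (S := rowFinset a T) (fun k => T (0, k + 1))
      (fun k hk => by
        rw [rowFinset, Finset.mem_image]
        rw [hRcard] at hk
        exact ⟨k + 1, Finset.mem_Icc.2 (by omega), rfl⟩)
      (fun k l hkl hl => by
        rw [hRcard] at hl
        have hck : ((0, k+1) : ℕ × ℕ) ∈ cells (hook a b) := by rw [mem_cells_hook]; omega
        have hcl : ((0, l+1) : ℕ × ℕ) ∈ cells (hook a b) := by rw [mem_cells_hook]; omega
        exact hT.2.2 (0, k+1) hck (0, l+1) hcl (le_refl 0) (by omega)
          (by intro h; rw [Prod.mk.injEq] at h; omega))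
      (j - 1) (by rw [hRcard]; omega)
    have key' : T (0, j - 1 + 1) = enum (rowFinset a T) (j - 1) := key
    have hj1 : j - 1 + 1 = j := by omega
    rw [hj1] at key'
    exact key'.symm
  · -- first column
    rw [hookTab_col h2' h3]
    have hCcard := card_cpl hRsub hRcard
    have key := enum_unique (S := Finset.Icc 3 (a + b + 1) \ rowFinset a T)
      (fun k => T (k + 2, 0))
      (fun k hk => by
        rw [hCcard] at hk
        have hck : ((k+2, 0) : ℕ × ℕ) ∈ cells (hook a b) := by rw [mem_cells_hook]; omega
        show T (k + 2, 0) ∈ Finset.Icc 3 (a + b + 1) \ rowFinset a T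
        rw [Finset.mem_sdiff]
        constructor
        · have hIcc : T (k+2, 0) ∈ Set.Icc 1 (a+b+1) := hT.1.1 (Finset.mem_coe.2 hck)
          rw [Set.mem_Icc] at hIcc
          have hgt : T (1, 0) < T (k+2, 0) := hT.2.2 (1,0) h10 (k+2,0) hck (by omega)
            (le_refl 0) (by intro h; rw [Prod.mk.injEq] at h; omega)
          rw [h2] at hgt
          rw [Finset.mem_Icc]
          omega
        · intro hmem
          rw [rowFinset, Finset.mem_image] at hmem
          obtain ⟨j₀, hj₀, hj₀e⟩ := hmem
          rw [Finset.mem_Icc] at hj₀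
          have hcj : ((0, j₀) : ℕ × ℕ) ∈ cells (hook a b) := by rw [mem_cells_hook]; omega
          have := hT.1.2.1 (Finset.mem_coe.2 hcj) (Finset.mem_coe.2 hck) hj₀e
          rw [Prod.mk.injEq] at this
          omega)
      (fun k l hkl hl => by
        rw [hCcard] at hl
        have hck : ((k+2, 0) : ℕ × ℕ) ∈ cells (hook a b) := by rw [mem_cells_hook]; omega
        have hcl : ((l+2, 0) : ℕ × ℕ) ∈ cells (hook a b) := by rw [mem_cells_hook]; omega
        exact hT.2.2 (k+2, 0) hck (l+2, 0) hcl (by omega) (le_refl 0)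
          (by intro h; rw [Prod.mk.injEq] at h; omega))
      (i - 2) (by rw [hCcard]; omega)
    have key' : T (i - 2 + 2, 0) = enum (Finset.Icc 3 (a + b + 1) \ rowFinset a T) (i - 2) := key
    have hi1 : i - 2 + 2 = i := by omega
    rw [hi1] at key'
    exact key'.symm

lemma rowFinset_hookTab (hsub : S ⊆ Finset.Icc 3 (a + b + 1)) (hcard : S.card = a) :
    rowFinset a (hookTab a b S) = S := by
  ext x
  rw [rowFinset, Finset.mem_image]
  constructor
  · rintro ⟨j, hj, rfl⟩
    rw [Finset.mem_Icc] at hj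
    rw [hookTab_row hj.1 hj.2]
    exact enum_mem (by omega)
  · intro hx
    obtain ⟨k, hk, hke⟩ := enum_surj hx
    rw [hcard] at hk
    refine ⟨k + 1, Finset.mem_Icc.2 (by omega), ?_⟩
    rw [hookTab_row (by omega) (by omega)]
    simpa using hke

end HookTab

/-! ### The count of standard Young tableaux of hooks with `2` in the first column -/

lemma gSYT_hook_zero (a : ℕ) : gSYT (hook a 0) = 0 := by
  have : IsEmpty {T : ℕ × ℕ → ℕ // IsSYT (hook a 0) T ∧ T (1, 0) = 2} := by
    constructor
    rintro ⟨T, hT, h2⟩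
    have hnc : ((1, 0) : ℕ × ℕ) ∉ cells (hook a 0) := by rw [mem_cells_hook]; omega
    have := hT.2.1 _ hnc
    rw [h2] at this
    exact absurd this (by norm_num)
  exact Nat.card_of_isEmpty

lemma gSYT_hook {a b : ℕ} (hb : 1 ≤ b) : gSYT (hook a b) = (a + b - 1).choose a := by
  have e : {T : ℕ × ℕ → ℕ // IsSYT (hook a b) T ∧ T (1, 0) = 2} ≃
      {S : Finset ℕ // S ⊆ Finset.Icc 3 (a + b + 1) ∧ S.card = a} :=
    { toFun := fun T => ⟨rowFinset a T.1, rowFinset_subset hb T.2.1 T.2.2,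
        rowFinset_card T.2.1⟩
      invFun := fun S => ⟨hookTab a b S.1, hookTab_isSYT hb S.2.1 S.2.2, hookTab_10⟩
      left_inv := fun T => Subtype.ext (hookTab_rowFinset hb T.2.1 T.2.2)
      right_inv := fun S => Subtype.ext (rowFinset_hookTab S.2.1 S.2.2) }
  rw [gSYT, Nat.card_congr e,
    Nat.card_congr (Equiv.subtypeEquivRight
      (fun S => (Finset.mem_powersetCard (s := S) (t := Finset.Icc 3 (a+b+1)) (n := a)).symm)),
    Nat.card_eq_finsetCard, Finset.card_powersetCard, card_Icc3]

lemma isChiral_hook_iff {a b : ℕ} :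
    IsChiral (hook a b) ↔ 1 ≤ b ∧ Odd ((a + b - 1).choose a) := by
  rcases Nat.eq_zero_or_pos b with rfl | hb
  · rw [IsChiral, gSYT_hook_zero]
    simp
  · rw [IsChiral, gSYT_hook hb]
    exact ⟨fun h => ⟨hb, h⟩, fun h => h.2⟩



theorem chiral_hook_count (n : ℕ) (hn : 2 ≤ n) :
    Nat.card {ab : ℕ × ℕ // ab.1 + ab.2 + 1 = n ∧ IsChiral (hook ab.1 ab.2)} =
      2 ^ nu (n - 2) := by
  have e : {ab : ℕ × ℕ // ab.1 + ab.2 + 1 = n ∧ IsChiral (hook ab.1 ab.2)} ≃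
      {S : Finset ℕ // S ⊆ binSet (n - 2)} :=
    { toFun := fun x => ⟨binSet x.1.1, by
        obtain ⟨⟨a, b⟩, h1, hch⟩ := x
        obtain ⟨hb, hodd⟩ := isChiral_hook_iff.1 hch
        dsimp only at h1 ⊢
        have hab : a + b - 1 = n - 2 := by omega
        rw [hab] at hodd
        intro i hi
        exact mem_binSet.2 (odd_choose_iff.1 hodd i (mem_binSet.1 hi))⟩
      invFun := fun S =>
        ⟨(∑ i ∈ S.1, 2 ^ i, n - 2 - (∑ i ∈ S.1, 2 ^ i) + 1), by
          obtain ⟨S, hS⟩ := S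
          dsimp only
          have hle : (∑ i ∈ S, 2 ^ i) ≤ n - 2 := by
            have := Finset.sum_le_sum_of_subset (f := fun i => 2 ^ i) hS
            rwa [sum_binSet] at this
          refine ⟨by omega, isChiral_hook_iff.2 ⟨by omega, ?_⟩⟩
          have hab : (∑ i ∈ S, 2 ^ i) + (n - 2 - (∑ i ∈ S, 2 ^ i) + 1) - 1 = n - 2 := by
            omega
          rw [hab]
          refine odd_choose_iff.2 fun i hi => ?_
          have : i ∈ binSet (∑ i ∈ S, 2 ^ i) := mem_binSet.2 hi
          rw [binSet_sum] at this
          exact mem_binSet.1 (hS this)⟩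
      left_inv := fun x => by
        obtain ⟨⟨a, b⟩, h1, hch⟩ := x
        have hb := (isChiral_hook_iff.1 hch).1
        apply Subtype.ext
        dsimp only
        rw [sum_binSet, Prod.mk.injEq]
        exact ⟨rfl, by omega⟩
      right_inv := fun S => by
        apply Subtype.ext
        dsimp only
        rw [binSet_sum] }
  rw [Nat.card_congr e,
    Nat.card_congr (Equiv.subtypeEquivRight
      (fun S => (Finset.mem_powerset (s := S) (t := binSet (n - 2))).symm)),
    Nat.card_eq_finsetCard, Finset.card_powerset, card_binSet]

end ChiralPaper
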